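/- For a complex d×d matrix A and p ∈ (1,∞) with q = p/(p-1), the quantity Δ_p(A) = min_{|ξ|=1} Re⟨Aξ, ξ + (1-2/p)ξ̄⟩ satisfies Δ_p(A) = Δ_q(A). -/

import Mathlib

open scoped ComplexConjugate

noncomputable def Ip (p : ℝ) {d : ℕ} (ξ : EuclideanSpace ℂ (Fin d)) : EuclideanSpace ℂ (Fin d) :=
  WithLp.toLp 2 (fun i => ξ i + ((1 - 2 / p : ℝ) : ℂ) * conj (ξ i))

noncomputable def mulVecE {d : ℕ} (A : Matrix (Fin d) (Fin d) ℂ)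
    (ξ : EuclideanSpace ℂ (Fin d)) : EuclideanSpace ℂ (Fin d) :=
  WithLp.toLp 2 (fun i => ∑ j, A i j * ξ j)

noncomputable def Delta (p : ℝ) {d : ℕ} (A : Matrix (Fin d) (Fin d) ℂ) : ℝ :=
  sInf { r : ℝ | ∃ ξ : EuclideanSpace ℂ (Fin d), ‖ξ‖ = 1 ∧
    r = (@inner ℂ _ _ (mulVecE A ξ) (Ip p ξ)).re }

lemma key_inner {d : ℕ} (A : Matrix (Fin d) (Fin d) ℂ) (p q : ℝ)
    (h : (1 - 2 / q : ℝ) = -(1 - 2 / p)) (ξ : EuclideanSpace ℂ (Fin d)) :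
    (@inner ℂ _ _ (mulVecE A (Complex.I • ξ)) (Ip q (Complex.I • ξ)) : ℂ)
      = @inner ℂ _ _ (mulVecE A ξ) (Ip p ξ) := by
  unfold mulVecE Ip
  simp only [PiLp.inner_apply, RCLike.inner_apply, PiLp.smul_apply, smul_eq_mul, h, map_mul,
    Complex.conj_I, map_sum, Complex.ofReal_neg]
  refine Finset.sum_congr rfl fun i _ => ?_
  have hs : ∑ j, conj (A i j) * (-Complex.I * conj (ξ j))
      = -Complex.I * ∑ j, conj (A i j) * conj (ξ j) := by
    rw [Finset.mul_sum]
    exact Finset.sum_congr rfl fun j _ => by ring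
  rw [hs]
  linear_combination (-((∑ x : Fin d, conj (A i x) * conj (ξ x)) *
    (ξ i + ((1 - 2 / p : ℝ) : ℂ) * conj (ξ i)))) * Complex.I_sq

theorem stmt0 {d : ℕ} (hd : 0 < d) (A : Matrix (Fin d) (Fin d) ℂ) (p : ℝ) (hp : 1 < p) :
    Delta p A = Delta (p / (p - 1)) A := by
  have hp0 : p ≠ 0 := by positivity
  have hp1 : p - 1 ≠ 0 := by intro h; nlinarith
  have hc : (1 - 2 / (p / (p - 1)) : ℝ) = -(1 - 2 / p) := by
    field_simp
    ring
  have hc' : (1 - 2 / p : ℝ) = -(1 - 2 / (p / (p - 1))) := by rw [hc]; ring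
  unfold Delta
  congr 1
  ext r
  constructor
  · rintro ⟨ξ, hξ, rfl⟩
    exact ⟨Complex.I • ξ, by rw [norm_smul, Complex.norm_I, one_mul, hξ],
      by rw [key_inner A p (p / (p - 1)) hc ξ]⟩
  · rintro ⟨ξ, hξ, rfl⟩
    exact ⟨Complex.I • ξ, by rw [norm_smul, Complex.norm_I, one_mul, hξ],
      by rw [key_inner A (p / (p - 1)) p hc' ξ]⟩
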